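/- For every natural i ≥ 1, the series P_i = 1 + Σ_{n=1}^∞ (−1)^n · Q_{i,n}/(2n+1), with Q_{i,n} = ∏_{j=1}^{n} ((i+1)/(2j) − 1), converges. -/

import Mathlib

open Finset

noncomputable def Q (i n : ℕ) : ℝ :=
  ∏ j ∈ Finset.Icc 1 n, (((i : ℝ) + 1) / (2 * (j : ℝ)) - 1)

lemma Q_succ (i n : ℕ) : Q i (n+1) = Q i n * (((i:ℝ)+1)/(2*((n:ℝ)+1)) - 1) := by
  unfold Q
  rw [Finset.prod_Icc_succ_top (by omega : 1 ≤ n+1)]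
  push_cast
  ring

lemma Q_bound (i : ℕ) (hi : 1 ≤ i) (n : ℕ) :
    |Q i (i+1+n)| * ((i:ℝ)+1+n) ≤ |Q i (i+1)| * ((i:ℝ)+1) := by
  induction n with
  | zero => simp
  | succ n ih =>
    have h1 : i+1+(n+1) = (i+1+n)+1 := by omega
    rw [h1, Q_succ, abs_mul]
    have hx : (0:ℝ) < (i:ℝ)+(n:ℝ)+2 := by positivity
    have hi1 : (2:ℝ) ≤ (i:ℝ)+1 := by
      have : (1:ℝ) ≤ (i:ℝ) := by exact_mod_cast hi
      linarith
    have hcast : ((i+1+n : ℕ) : ℝ) = (i:ℝ)+1+(n:ℝ) := by push_cast; ring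
    rw [hcast]
    have hQ : (0:ℝ) ≤ |Q i (i+1+n)| := abs_nonneg _
    have hfac : |((i:ℝ)+1)/(2*(((i:ℝ)+1+(n:ℝ))+1)) - 1| * ((i:ℝ)+(n:ℝ)+2)
        ≤ (i:ℝ)+1+(n:ℝ) := by
      have h2 : ((i:ℝ)+1)/(2*(((i:ℝ)+1+(n:ℝ))+1)) = ((i:ℝ)+1)/(2*((i:ℝ)+(n:ℝ)+2)) := by
        ring_nf
      rw [h2]
      have hlt : ((i:ℝ)+1)/(2*((i:ℝ)+(n:ℝ)+2)) ≤ 1 := by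
        rw [div_le_one (by positivity)]; linarith
      rw [abs_sub_comm, abs_of_nonneg (by linarith)]
      have : (1 - ((i:ℝ)+1)/(2*((i:ℝ)+(n:ℝ)+2))) * ((i:ℝ)+(n:ℝ)+2)
          = (i:ℝ)+(n:ℝ)+2 - ((i:ℝ)+1)/2 := by
        field_simp
      rw [this]
      linarith
    have key := mul_le_mul_of_nonneg_left hfac hQ
    have hcast2 : ((i:ℝ)+1+((n+1:ℕ):ℝ)) = (i:ℝ)+(n:ℝ)+2 := by push_cast; ring
    rw [hcast2]
    nlinarith

theorem stmt_9 (i : ℕ) (hi : 1 ≤ i) :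
    Summable (fun n : ℕ => (-1 : ℝ) ^ (n + 1) * Q i (n + 1) / (2 * ((n : ℝ) + 1) + 1)) := by
  rw [← summable_abs_iff]
  rw [← summable_nat_add_iff i]
  have hg : Summable (fun n : ℕ => (|Q i (i+1)| * ((i:ℝ)+1)) * (1/((n:ℝ)+1)^2)) := by
    apply Summable.mul_left
    have h2 : Summable (fun n : ℕ => 1 / ((n:ℝ))^2) := by
      simpa using Real.summable_one_div_nat_pow.mpr one_lt_two
    have h3 := (summable_nat_add_iff 1).mpr h2
    simpa using h3
  refine hg.of_nonneg_of_le (fun n => abs_nonneg _) fun n => ?_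
  set c : ℝ := |Q i (i+1)| * ((i:ℝ)+1) with hc
  have hc0 : 0 ≤ c := by positivity
  have hb := Q_bound i hi n
  have hcast : i + 1 + n = (n + i) + 1 := by omega
  rw [hcast] at hb
  have hden : (0:ℝ) < 2 * (((n+i:ℕ):ℝ) + 1) + 1 := by positivity
  have habs : |(-1 : ℝ) ^ ((n+i) + 1) * Q i ((n+i) + 1) / (2 * (((n+i:ℕ):ℝ) + 1) + 1)|
      = |Q i ((n+i)+1)| / (2 * (((n+i:ℕ):ℝ) + 1) + 1) := by
    rw [abs_div, abs_mul, abs_pow, abs_neg, abs_one, one_pow, one_mul,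
      abs_of_pos hden]
  rw [habs]
  have hrw : c * (1/((n:ℝ)+1)^2) = c / ((n:ℝ)+1)^2 := by ring
  rw [hrw, div_le_div_iff₀ hden (by positivity)]
  have hcn : ((n+i:ℕ):ℝ) = (n:ℝ) + (i:ℝ) := by push_cast; ring
  rw [hcn]
  have hQ0 : (0:ℝ) ≤ |Q i ((n+i)+1)| := abs_nonneg _
  have hi0 : (0:ℝ) ≤ (i:ℝ) := Nat.cast_nonneg i
  have hn0 : (0:ℝ) ≤ (n:ℝ) := Nat.cast_nonneg n
  have hkey := mul_le_mul_of_nonneg_right hb (by positivity : (0:ℝ) ≤ (n:ℝ)+1)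
  nlinarith [mul_nonneg (mul_nonneg hQ0 hi0) (by linarith : (0:ℝ) ≤ (n:ℝ)+1),
    mul_nonneg hc0 (by linarith : (0:ℝ) ≤ (n:ℝ)+2*(i:ℝ)+2)]
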